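/- There do not exist integers c₀, d₀, d₁, d₂ such that t^6 + 6t^5 + 15t^4 + 36t^3 + 15t^2 + 6t + 1 = (t^2 + 6c₀t + 1)(t^4 + 6d₀t^3 + (2+6d₁)t^2 + 6d₂t + 1) in ℤ[t]. -/
import Mathlib


open Polynomial

/-- There is no factorization
`t^6+6t^5+15t^4+36t^3+15t^2+6t+1 = (t^2+6c₀t+1)(t^4+6d₀t^3+(2+6d₁)t^2+6d₂t+1)`
with integers `c₀, d₀, d₁, d₂`. -/
theorem stmt_8 :
    ¬ ∃ c₀ d₀ d₁ d₂ : ℤ,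
      (X^6 + 6*X^5 + 15*X^4 + 36*X^3 + 15*X^2 + 6*X + 1 : ℤ[X])
        = (X^2 + C (6*c₀) * X + 1)
          * (X^4 + C (6*d₀) * X^3 + C (2 + 6*d₁) * X^2 + C (6*d₂) * X + 1) := by
  rintro ⟨c₀, d₀, d₁, d₂, h⟩
  have h' : (C 1 * X^6 + C 6 * X^5 + C 15 * X^4 + C 36 * X^3 + C 15 * X^2
        + C 6 * X^1 + C 1 * X^0 : ℤ[X])
      = C 1 * X^6 + C (6*c₀ + 6*d₀) * X^5 + C ((2+6*d₁) + 6*c₀*(6*d₀) + 1) * X^4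
        + C (6*d₂ + 6*c₀*(2+6*d₁) + 6*d₀) * X^3 + C (1 + 6*c₀*(6*d₂) + (2+6*d₁)) * X^2
        + C (6*c₀ + 6*d₂) * X^1 + C 1 * X^0 := by
    have e1 : (C 1 * X^6 + C 6 * X^5 + C 15 * X^4 + C 36 * X^3 + C 15 * X^2
        + C 6 * X^1 + C 1 * X^0 : ℤ[X])
        = X^6 + 6*X^5 + 15*X^4 + 36*X^3 + 15*X^2 + 6*X + 1 := by
      simp only [map_one, one_mul, pow_zero, pow_one, map_ofNat]
    rw [e1, h]
    simp only [map_add, map_mul, map_ofNat, map_one]; ring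
  have h5 := congrArg (fun p => p.coeff 5) h'
  have h3 := congrArg (fun p => p.coeff 3) h'
  have h1 := congrArg (fun p => p.coeff 1) h'
  simp only [coeff_add, coeff_C_mul, coeff_X_pow] at h5 h3 h1
  norm_num at h5 h3 h1
  -- h5 : 6 = 6*c₀+6*d₀, h1 : 6 = 6*c₀+6*d₂, h3 : 36 = 6*d₂+6*c₀*(2+6*d₁)+6*d₀
  have key : 36 * (c₀ * d₁) = 24 := by linear_combination h5 + h1 - h3
  omega
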